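/- Let G be a deterministic regular tree grammar with bottom-up parser as above. For every nonterminal A and every tree x ∈ L(G|A), the parser on input x succeeds and returns exactly the pair (A, r̄) where r̄ is the unique rule sequence generating x from A. -/

import Mathlib

structure Rule (N : Type) (α : Type) where
  lhs : N
  sym : α
  rhs : List N
deriving DecidableEq

inductive RTree (α : Type) where
  | node : α → List (RTree α) → RTree α

def RTree.size {α : Type} : RTree α → Nat
  | .node _ ys => 1 + (ys.attach.map (fun y => RTree.size y.1)).sum
decreasing_by have := List.sizeOf_lt_of_mem y.2; simp only [RTree.node.sizeOf_spec]; omega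

def RTree.children {α : Type} : RTree α → List (RTree α)
  | .node _ ys => ys

def RTree.root {α : Type} : RTree α → α
  | .node x _ => x

def RTree.dfs {α : Type} : RTree α → List (RTree α)
  | .node x ys => (ys.attach.map (fun y => RTree.dfs y.1)).flatten ++ [.node x ys]
decreasing_by have := List.sizeOf_lt_of_mem y.2; simp only [RTree.node.sizeOf_spec]; omega

inductive GenList {N α : Type} (R : Set (Rule N α)) :
    List (Rule N α) → List N → List (RTree α) → Prop where
  | nil : GenList R [] [] []
  | step {r : Rule N α} {rs : List (Rule N α)} {stack : List N}
      {ys ts : List (RTree α)} :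
      r ∈ R →
      ys.length = r.rhs.length →
      GenList R rs (r.rhs ++ stack) (ys ++ ts) →
      GenList R (r :: rs) (r.lhs :: stack) (RTree.node r.sym ys :: ts)

def GenSeq {N α : Type} (R : Set (Rule N α)) (rs : List (Rule N α))
    (A : N) (t : RTree α) : Prop :=
  GenList R rs [A] [t]

def Lang {N α : Type} (R : Set (Rule N α)) (A : N) : Set (RTree α) :=
  {t | ∃ rs, GenSeq R rs A t}

def LangN {N α : Type} (R : Set (Rule N α)) (A : N) (n : Nat) : Set (RTree α) :=
  {t ∈ Lang R A | t.size ≤ n}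

def Deterministic {N α : Type} (R : Set (Rule N α)) : Prop :=
  ∀ r ∈ R, ∀ r' ∈ R, r.sym = r'.sym → r.rhs = r'.rhs → r = r'

def parse {N α : Type} [DecidableEq N] [DecidableEq α] (R : List (Rule N α)) :
    RTree α → Option (N × List (Rule N α))
  | RTree.node x ys => do
    let res ← ys.attach.mapM (fun y => parse R y.1)
    match R.find? (fun r => r.sym == x && r.rhs == res.map Prod.fst) with
    | some r => some (r.lhs, r :: (res.map Prod.snd).flatten)
    | none => none
decreasing_by have := List.sizeOf_lt_of_mem y.2; simp only [RTree.node.sizeOf_spec]; omega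

theorem mapM_map' {β γ δ : Type} (f : γ → Option δ) (g : β → γ) (l : List β) :
    (l.map g).mapM f = l.mapM (fun x => f (g x)) := by
  induction l with
  | nil => rfl
  | cons a l ih => rw [List.map_cons, List.mapM_cons, List.mapM_cons, ih]

theorem mapM_attach' {β δ : Type} (f : β → Option δ) (l : List β) :
    l.attach.mapM (fun x => f x.1) = l.mapM f := by
  induction l with
  | nil => rfl
  | cons a l ih =>
    rw [List.attach_cons, List.mapM_cons, mapM_map', List.mapM_cons]
    have : (fun (x : {x // x ∈ l}) => f (↑(match x with | ⟨y, h⟩ => (⟨y, by simp [h]⟩ : {x // x ∈ a :: l})))) = fun x => f x.1 := by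
      funext x; cases x; rfl
    rw [this, ih]

theorem mapM_length' {β δ : Type} {f : β → Option δ} : ∀ {l : List β} {r : List δ},
    l.mapM f = some r → r.length = l.length := by
  intro l
  induction l with
  | nil =>
    intro r h
    simp only [List.mapM_nil, Option.pure_def, Option.some.injEq] at h
    subst h; rfl
  | cons a l ih =>
    intro r h
    rw [List.mapM_cons] at h
    simp only [Option.bind_eq_bind, Option.bind_eq_some_iff, Option.pure_def, Option.some.injEq] at h
    obtain ⟨b, _, r', hr', rfl⟩ := h
    simp [ih hr']

theorem main_parse {N α : Type} [DecidableEq N] [DecidableEq α] (R : List (Rule N α))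
    (hdet : Deterministic {r | r ∈ R}) :
    ∀ {rs : List (Rule N α)} {Bs : List N} {ys : List (RTree α)},
      GenList {r | r ∈ R} rs Bs ys →
      ∃ res, ys.mapM (parse R) = some res ∧ res.map Prod.fst = Bs ∧
        (res.map Prod.snd).flatten = rs := by
  intro rs Bs ys h
  induction h with
  | nil => exact ⟨[], rfl, rfl, rfl⟩
  | @step r rs0 stack ys ts hr hlen hsub ih =>
    obtain ⟨res, hm, hfst, hsnd⟩ := ih
    rw [List.mapM_append] at hm
    simp only [Option.bind_eq_bind, Option.bind_eq_some_iff, Option.pure_def, Option.some.injEq] at hm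
    obtain ⟨r1, h1, r2, h2, rfl⟩ := hm
    have hlen1 : r1.length = ys.length := mapM_length' h1
    rw [List.map_append] at hfst
    have hsp := List.append_inj hfst (by simp [hlen1, hlen])
    obtain ⟨hfst1, hfst2⟩ := hsp
    -- parse the node
    have hnode : parse R (RTree.node r.sym ys) = some (r.lhs, r :: (r1.map Prod.snd).flatten) := by
      rw [parse]
      rw [mapM_attach', h1]
      have hpred : (fun r' : Rule N α => r'.sym == r.sym && r'.rhs == r1.map Prod.fst) r = true := by
        simp [hfst1]
      have hsome : (R.find? (fun r' => r'.sym == r.sym && r'.rhs == r1.map Prod.fst)).isSome := by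
        rw [List.find?_isSome]; exact ⟨r, hr, hpred⟩
      obtain ⟨r'', hfind⟩ := Option.isSome_iff_exists.mp hsome
      have hp := List.find?_some hfind
      simp only [Bool.and_eq_true, beq_iff_eq] at hp
      have hmem := List.mem_of_find?_eq_some hfind
      have : r'' = r := hdet r'' hmem r hr hp.1 (hp.2.trans hfst1)
      rw [Option.bind_eq_bind, Option.bind_some, hfind, this]
    refine ⟨(r.lhs, r :: (r1.map Prod.snd).flatten) :: r2, ?_, ?_, ?_⟩
    · rw [List.mapM_cons, hnode, h2]; rfl
    · simp [hfst2]
    · simp only [List.map_cons, List.flatten_cons, List.map_append,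
        List.flatten_append] at hsnd ⊢
      rw [List.cons_append, hsnd]

theorem stmt5 {N alpha : Type} [DecidableEq N] [DecidableEq alpha]
    (R : List (Rule N alpha)) (hdet : Deterministic {r | r ∈ R})
    (A : N) (t : RTree alpha) (h : t ∈ Lang {r | r ∈ R} A) :
    ∃ rs : List (Rule N alpha), parse R t = some (A, rs) ∧
      GenSeq {r | r ∈ R} rs A t ∧
      ∀ rs' : List (Rule N alpha), GenSeq {r | r ∈ R} rs' A t → rs' = rs := by
  obtain ⟨rs, hrs⟩ := h
  have key : ∀ rs' : List (Rule N alpha), GenSeq {r | r ∈ R} rs' A t →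
      parse R t = some (A, rs') := by
    intro rs' h'
    obtain ⟨res, hm, hfst, hsnd⟩ := main_parse R hdet h'
    rw [List.mapM_cons, List.mapM_nil] at hm
    cases hp : parse R t with
    | none => rw [hp] at hm; simp at hm
    | some p =>
      rw [hp] at hm
      simp only [Option.pure_def, Option.bind_eq_bind, Option.bind_some,
        Option.some.injEq] at hm
      subst hm
      simp only [List.map_cons, List.map_nil, List.flatten_cons, List.flatten_nil,
        List.append_nil, List.cons.injEq, and_true] at hfst hsnd
      obtain ⟨p1, p2⟩ := p
      simp only at hfst hsnd
      rw [hfst, hsnd]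
  refine ⟨rs, key rs hrs, hrs, fun rs' h' => ?_⟩
  have h1 := key rs hrs
  have h2 := key rs' h'
  rw [h1] at h2
  exact ((Prod.mk.injEq _ _ _ _).mp (Option.some.inj h2).symm).2
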